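/- For every 0-free and rdy-free contract c, c is compliant with its dual contract dual(c), where the dual swaps internal and external sums and replaces every atom by its co-atom. -/

import Mathlib

/-! Contracts à la Castagna et al., as in "Contracts in distributed systems".
Atoms are integers; the involution `co` is negation, the success atom `e` is 0
(so that `co e = e`). Contracts use de Bruijn indices for recursion variables. -/

abbrev Atom := ℤ

def co (a : Atom) : Atom := -a

def eAtom : Atom := 0

inductive Contract : Type where
  | intSum : List (Atom × Contract) → Contract
  | extSum : List (Atom × Contract) → Contract
  | rdy    : Atom → Contract → Contract
  | recur  : Contract → Contract
  | var    : ℕ → Contract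

namespace Contract

/-- The failure contract `0` (empty internal and external sums are identified
by structural congruence). -/
def isZero (c : Contract) : Prop := c = intSum [] ∨ c = extSum []

-- Substitution of a (closed) contract `u` for de Bruijn variable `k`.
mutual
def csubst (u : Contract) : ℕ → Contract → Contract
  | k, var n => if n = k then u else var n
  | k, recur c => recur (csubst u (k+1) c)
  | k, rdy a c => rdy a (csubst u k c)
  | k, intSum l => intSum (csubstL u k l)
  | k, extSum l => extSum (csubstL u k l)
def csubstL (u : Contract) : ℕ → List (Atom × Contract) → List (Atom × Contract)
  | _, [] => []
  | k, (a, c) :: t => (a, csubst u k c) :: csubstL u k t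
end

/-- The success contract `E = rec X. e ; X`. -/
def Econ : Contract := recur (intSum [(eAtom, var 0)])

/-- `var n` occurs unguarded (not under any sum / rdy prefix). -/
inductive UnguardedVar : ℕ → Contract → Prop where
  | var : UnguardedVar n (var n)
  | recur : UnguardedVar (n+1) c → UnguardedVar n (recur c)

/-- Well-formed contracts with free variables below `k`: atoms in each sum are
pairwise distinct, recursion is guarded. -/
inductive WF : ℕ → Contract → Prop where
  | intSum : (l.map Prod.fst).Nodup → (∀ p ∈ l, WF k p.2) → WF k (intSum l)
  | extSum : (l.map Prod.fst).Nodup → (∀ p ∈ l, WF k p.2) → WF k (extSum l)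
  | rdy : WF k c → WF k (rdy a c)
  | recur : ¬ UnguardedVar 0 c → WF (k+1) c → WF k (recur c)
  | var : n < k → WF k (var n)

/-- `rdy`-free contracts. -/
inductive RdyFree : Contract → Prop where
  | intSum : (∀ p ∈ l, RdyFree p.2) → RdyFree (intSum l)
  | extSum : (∀ p ∈ l, RdyFree p.2) → RdyFree (extSum l)
  | recur : RdyFree c → RdyFree (recur c)
  | var : RdyFree (var n)

/-- `0`-free contracts: no empty sum occurs. -/
inductive ZeroFree : Contract → Prop where
  | intSum : l ≠ [] → (∀ p ∈ l, ZeroFree p.2) → ZeroFree (intSum l)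
  | extSum : l ≠ [] → (∀ p ∈ l, ZeroFree p.2) → ZeroFree (extSum l)
  | rdy : ZeroFree c → ZeroFree (rdy a c)
  | recur : ZeroFree c → ZeroFree (recur c)
  | var : ZeroFree (var n)

/-- A `rdy` prefix may occur at top level only. -/
def TopRdy (c : Contract) : Prop :=
  RdyFree c ∨ ∃ a c', c = rdy a c' ∧ RdyFree c'

end Contract

open Contract

/-- One step of participant `A` (first component) in a bilateral contract
`A says c | B says d`: rules [IntExt], [IntInt], [ExtExt], [Rdy] and the
failure rules, plus unfolding of recursion (structural congruence). -/
inductive StepA : Contract → Contract → Atom → Contract → Contract → Prop where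
  | intExt : (a, c') ∈ l → (co a, d') ∈ m →
      StepA (.intSum l) (.extSum m) a c' (.rdy (co a) d')
  | intInt : (a, c') ∈ l →
      StepA (.intSum l) (.intSum [(co a, d')]) a c' (.rdy (co a) d')
  | extExt : (a, c') ∈ l → (co a, d') ∈ m →
      StepA (.extSum l) (.extSum m) a c' (.rdy (co a) d')
  | rdy : StepA (.rdy a c) d a c d
  | intExtFail : (a, c') ∈ l → (∀ q ∈ m, co q.1 ≠ a) →
      StepA (.intSum l) (.extSum m) a Econ (.intSum [])
  | intIntFail : (a, c') ∈ l → ¬ (m ≠ [] ∧ ∀ q ∈ m, co q.1 = a) →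
      StepA (.intSum l) (.intSum m) a Econ (.intSum [])
  | extExtFail : (a, c') ∈ l → (∀ p ∈ l, ∀ q ∈ m, p.1 ≠ co q.1) →
      StepA (.extSum l) (.extSum m) a Econ (.intSum [])
  | recL : StepA (csubst (.recur c) 0 c) d a c' d' → StepA (.recur c) d a c' d'
  | recR : StepA c (csubst (.recur d) 0 d) a c' d' → StepA c (.recur d) a c' d'

/-- The two participants of a bilateral contract. -/
inductive Ptp : Type where
  | A | B
deriving DecidableEq

inductive CLabel : Type where
  | says : Ptp → Atom → CLabel
deriving DecidableEq

/-- Labelled transitions of bilateral contracts. -/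
inductive Step : Contract × Contract → CLabel → Contract × Contract → Prop where
  | left  : StepA c d a c' d' → Step (c, d) (.says .A a) (c', d')
  | right : StepA d c a d' c' → Step (c, d) (.says .B a) (c', d')

/-- Participant `p` is culpable in the bilateral contract `γ`. -/
def frown (p : Ptp) (γ : Contract × Contract) : Prop :=
  isZero (match p with | .A => γ.1 | .B => γ.2) ∨
  ((¬ ∃ γ', Step γ (.says p eAtom) γ') ∧ (∃ a γ', Step γ (.says p a) γ'))

/-- Tokens occurring in ready sets: atoms, or the `rdy` marker. -/
inductive RToken : Type where
  | atom : Atom → RToken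
  | rdy  : RToken
deriving DecidableEq

def coT : RToken → RToken
  | .atom a => .atom (co a)
  | .rdy => .rdy

/-- Ready sets. -/
def RS : Contract → Set (Set RToken)
  | .intSum [] => {∅}
  | .intSum (p :: l) => {X | ∃ q ∈ p :: l, X = {RToken.atom q.1}}
  | .extSum [] => {∅}
  | .extSum (p :: l) => {X | X = {t | ∃ q ∈ p :: l, t = RToken.atom q.1}}
  | .rdy _ _ => {{RToken.rdy}}
  | .recur c => RS c
  | .var _ => {∅}

/-- The defining clauses of compliance. -/
def CompRel' (R : Contract → Contract → Prop) : Prop :=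
  ∀ c d, R c d →
    (∀ X ∈ RS c, ∀ Y ∈ RS d,
        (∃ t ∈ X, coT t ∈ Y) ∨ RToken.rdy ∈ (X ∪ Y) \ (X ∩ Y)) ∧
    (∀ μ c' d', Step (c, d) μ (c', d') → R c' d')

/-- Compliance: the largest relation satisfying `CompRel`. -/
def Compliant (c d : Contract) : Prop := ∃ R, CompRel' R ∧ R c d

/-- A contract succeeds. -/
def Succeeds (c : Contract) : Prop :=
  (∃ l, c = .intSum l ∧ (eAtom, Econ) ∈ l) ∨
  (∃ l, c = .extSum l ∧ (eAtom, Econ) ∈ l) ∨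
  c = .rdy eAtom Econ

/-- Multi-step reduction of bilateral contracts. -/
def Reduces : Contract × Contract → Contract × Contract → Prop :=
  Relation.ReflTransGen (fun γ γ' => ∃ μ, Step γ μ γ')

/-- Bilateral well-formedness: `rdy` at top level only and at most one `rdy`. -/
def BCWF (γ : Contract × Contract) : Prop :=
  TopRdy γ.1 ∧ TopRdy γ.2 ∧ (RdyFree γ.1 ∨ RdyFree γ.2)

-- The dual contract: swap internal/external sums and complement every atom.
mutual
def dual : Contract → Contract
  | .intSum l => .extSum (dualL l)
  | .extSum l => .intSum (dualL l)
  | .rdy a c => .rdy (co a) (dual c)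
  | .recur c => .recur (dual c)
  | .var n => .var n
def dualL : List (Atom × Contract) → List (Atom × Contract)
  | [] => []
  | (a, c) :: t => (co a, dual c) :: dualL t
end
section Aux
open Contract

lemma csubstL_eq_map (u : Contract) (k : ℕ) (l : List (Atom × Contract)) :
    csubstL u k l = l.map (fun p => (p.1, csubst u k p.2)) := by
  induction l with
  | nil => simp [csubstL]
  | cons p t ih => cases p; simp [csubstL, ih]

lemma dualL_eq_map (l : List (Atom × Contract)) :
    dualL l = l.map (fun p => (co p.1, dual p.2)) := by
  induction l with
  | nil => simp [dualL]
  | cons p t ih => cases p; simp [dualL, ih]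

mutual
theorem dual_csubst (u : Contract) (k : ℕ) :
    (c : Contract) → dual (csubst u k c) = csubst (dual u) k (dual c)
  | .intSum l => by simp [csubst, dual, dual_csubstL u k l]
  | .extSum l => by simp [csubst, dual, dual_csubstL u k l]
  | .rdy a c => by simp [csubst, dual, dual_csubst u k c]
  | .recur c => by simp [csubst, dual, dual_csubst u (k+1) c]
  | .var n => by
      by_cases h : n = k <;> simp [csubst, dual, h]
theorem dual_csubstL (u : Contract) (k : ℕ) :
    (l : List (Atom × Contract)) → dualL (csubstL u k l) = csubstL (dual u) k (dualL l)
  | [] => rfl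
  | (a, c) :: t => by
      simp [csubstL, dualL, dual_csubst u k c, dual_csubstL u k t]
end

end Aux
section Aux2
open Contract

lemma fst_csubstL (u : Contract) (k : ℕ) (l : List (Atom × Contract)) :
    (csubstL u k l).map Prod.fst = l.map Prod.fst := by
  simp [csubstL_eq_map]

lemma rdyFree_csubst {u : Contract} (hu : RdyFree u) {c : Contract} (hc : RdyFree c) :
    ∀ k, RdyFree (csubst u k c) := by
  induction hc with
  | @intSum l h ih =>
      intro k; rw [csubst]
      refine RdyFree.intSum ?_
      intro p hp
      rw [csubstL_eq_map] at hp
      obtain ⟨q, hq, rfl⟩ := List.mem_map.1 hp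
      exact ih q hq k
  | @extSum l h ih =>
      intro k; rw [csubst]
      refine RdyFree.extSum ?_
      intro p hp
      rw [csubstL_eq_map] at hp
      obtain ⟨q, hq, rfl⟩ := List.mem_map.1 hp
      exact ih q hq k
  | @recur c h ih => intro k; rw [csubst]; exact RdyFree.recur (ih (k+1))
  | @var n =>
      intro k; by_cases h : n = k <;> simp [csubst, h]
      · exact hu
      · exact RdyFree.var

lemma zeroFree_csubst {u : Contract} (hu : ZeroFree u) {c : Contract} (hc : ZeroFree c) :
    ∀ k, ZeroFree (csubst u k c) := by
  induction hc with
  | @intSum l hne h ih =>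
      intro k; rw [csubst]
      refine ZeroFree.intSum (by simp [csubstL_eq_map, hne]) ?_
      intro p hp
      rw [csubstL_eq_map] at hp
      obtain ⟨q, hq, rfl⟩ := List.mem_map.1 hp
      exact ih q hq k
  | @extSum l hne h ih =>
      intro k; rw [csubst]
      refine ZeroFree.extSum (by simp [csubstL_eq_map, hne]) ?_
      intro p hp
      rw [csubstL_eq_map] at hp
      obtain ⟨q, hq, rfl⟩ := List.mem_map.1 hp
      exact ih q hq k
  | @rdy c a h ih => intro k; rw [csubst]; exact ZeroFree.rdy (ih k)
  | @recur c h ih => intro k; rw [csubst]; exact ZeroFree.recur (ih (k+1))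
  | @var n =>
      intro k; by_cases h : n = k <;> simp [csubst, h]
      · exact hu
      · exact ZeroFree.var

lemma ung_lt_of_wf {m : ℕ} {c : Contract} (h : UnguardedVar m c) :
    ∀ {k}, WF k c → m < k := by
  induction h with
  | var => intro k hw; cases hw; assumption
  | recur h ih => intro k hw; cases hw with
    | recur hg hw => exact Nat.lt_of_succ_lt_succ (ih hw)

lemma no_ung_of_closed {u : Contract} (hu : WF 0 u) : ∀ m, ¬ UnguardedVar m u :=
  fun m h => Nat.not_lt_zero m (ung_lt_of_wf h hu)

lemma ung_of_csubst {u : Contract} (hu : ∀ m, ¬ UnguardedVar m u) :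
    ∀ {m} {x}, UnguardedVar m x → ∀ {c k}, x = csubst u k c → UnguardedVar m c := by
  intro m x hx
  induction hx with
  | @var n =>
      intro c k he
      cases c with
      | var n' =>
          by_cases h : n' = k
          · simp [csubst, h] at he
            exact absurd (he ▸ UnguardedVar.var) (hu n)
          · simp [csubst, h] at he
            exact he ▸ UnguardedVar.var
      | intSum l => simp [csubst] at he
      | extSum l => simp [csubst] at he
      | rdy a c => simp [csubst] at he
      | recur c => simp [csubst] at he
  | @recur n x0 h ih =>
      intro c k he
      cases c with
      | var n' =>
          by_cases hh : n' = k
          · simp [csubst, hh] at he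
            exact absurd (he ▸ UnguardedVar.recur h) (hu n)
          · simp [csubst, hh] at he
      | intSum l => simp [csubst] at he
      | extSum l => simp [csubst] at he
      | rdy a c => simp [csubst] at he
      | recur c0 =>
          simp [csubst] at he
          exact UnguardedVar.recur (ih he)

lemma wf_mono {c : Contract} : ∀ {j}, WF j c → ∀ {j'}, j ≤ j' → WF j' c := by
  intro j h
  induction h with
  | intSum hnd h ih => intro j' hj; exact WF.intSum hnd (fun p hp => ih p hp hj)
  | extSum hnd h ih => intro j' hj; exact WF.extSum hnd (fun p hp => ih p hp hj)
  | rdy h ih => intro j' hj; exact WF.rdy (ih hj)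
  | recur hg h ih => intro j' hj; exact WF.recur hg (ih (Nat.succ_le_succ hj))
  | var hn => intro j' hj; exact WF.var (lt_of_lt_of_le hn hj)

lemma wf_csubst {u : Contract} (hu0 : WF 0 u) :
    ∀ {j c}, WF j c → ∀ k, j = k + 1 → WF k (csubst u k c) := by
  intro j c h
  induction h with
  | @intSum l j hnd h ih =>
      intro k hk; rw [csubst]
      refine WF.intSum (by rw [fst_csubstL]; exact hnd) ?_
      intro p hp
      rw [csubstL_eq_map] at hp
      obtain ⟨q, hq, rfl⟩ := List.mem_map.1 hp
      exact ih q hq k hk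
  | @extSum l j hnd h ih =>
      intro k hk; rw [csubst]
      refine WF.extSum (by rw [fst_csubstL]; exact hnd) ?_
      intro p hp
      rw [csubstL_eq_map] at hp
      obtain ⟨q, hq, rfl⟩ := List.mem_map.1 hp
      exact ih q hq k hk
  | @rdy j c a h ih => intro k hk; rw [csubst]; exact WF.rdy (ih k hk)
  | @recur c j hg h ih =>
      intro k hk; rw [csubst]
      refine WF.recur ?_ (ih (k+1) (by omega))
      intro hcon
      exact hg (ung_of_csubst (no_ung_of_closed hu0) hcon rfl)
  | @var n j hn =>
      intro k hk; subst hk; rw [csubst]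
      by_cases h : n = k
      · simp [h]; exact wf_mono hu0 (Nat.zero_le k)
      · simp [h]; exact WF.var (by omega)

theorem RS_csubst (u : Contract) :
    ∀ (c : Contract) (k : ℕ), ¬ UnguardedVar k c → RS (csubst u k c) = RS c
  | .intSum [], k, h => by simp [csubst, csubstL, RS]
  | .intSum (p :: t), k, h => by
      cases p with
      | mk a c =>
        rw [csubst, csubstL]
        show RS (Contract.intSum (_ :: _)) = _
        simp only [RS]
        ext X
        simp only [Set.mem_setOf_eq, List.mem_cons, csubstL_eq_map, List.mem_map]
        constructor
        · rintro ⟨q, (rfl | ⟨r, hr, rfl⟩), rfl⟩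
          · exact ⟨(a, c), Or.inl rfl, rfl⟩
          · exact ⟨r, Or.inr hr, rfl⟩
        · rintro ⟨q, (rfl | hq), rfl⟩
          · exact ⟨(a, csubst u k c), Or.inl rfl, rfl⟩
          · exact ⟨(q.1, csubst u k q.2), Or.inr ⟨q, hq, rfl⟩, rfl⟩
  | .extSum [], k, h => by simp [csubst, csubstL, RS]
  | .extSum (p :: t), k, h => by
      cases p with
      | mk a c =>
        rw [csubst, csubstL]
        show RS (Contract.extSum (_ :: _)) = _
        simp only [RS]
        ext X
        simp only [Set.mem_setOf_eq]
        constructor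
        · rintro rfl
          ext tk
          simp only [Set.mem_setOf_eq, List.mem_cons, csubstL_eq_map, List.mem_map]
          constructor
          · rintro ⟨q, (rfl | ⟨r, hr, rfl⟩), rfl⟩
            · exact ⟨(a, c), Or.inl rfl, rfl⟩
            · exact ⟨r, Or.inr hr, rfl⟩
          · rintro ⟨q, (rfl | hq), rfl⟩
            · exact ⟨(a, csubst u k c), Or.inl rfl, rfl⟩
            · exact ⟨(q.1, csubst u k q.2), Or.inr ⟨q, hq, rfl⟩, rfl⟩
        · rintro rfl
          ext tk
          simp only [Set.mem_setOf_eq, List.mem_cons, csubstL_eq_map, List.mem_map]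
          constructor
          · rintro ⟨q, (rfl | hq), rfl⟩
            · exact ⟨(a, csubst u k c), Or.inl rfl, rfl⟩
            · exact ⟨(q.1, csubst u k q.2), Or.inr ⟨q, hq, rfl⟩, rfl⟩
          · rintro ⟨q, (rfl | ⟨r, hr, rfl⟩), rfl⟩
            · exact ⟨(a, c), Or.inl rfl, rfl⟩
            · exact ⟨r, Or.inr hr, rfl⟩
  | .rdy a c, k, h => by rw [csubst]; simp [RS]
  | .recur c, k, h => by
      rw [csubst]
      show RS (Contract.recur _) = _
      simp only [RS]
      exact RS_csubst u c (k+1) (fun hc => h (UnguardedVar.recur hc))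
  | .var n, k, h => by
      have hnk : n ≠ k := fun e => h (e ▸ UnguardedVar.var)
      simp [csubst, hnk, RS]

end Aux2
section Aux3
open Contract

/-- One step of head unfolding. -/
def UStep (x y : Contract) : Prop := ∃ x0, x = Contract.recur x0 ∧ y = csubst x 0 x0

def UnfoldsTo : Contract → Contract → Prop := Relation.ReflTransGen UStep

def Good (e : Contract) : Prop := WF 0 e ∧ ZeroFree e ∧ RdyFree e

lemma good_ustep {x y : Contract} (hx : Good x) (h : UStep x y) : Good y := by
  obtain ⟨x0, rfl, rfl⟩ := h
  obtain ⟨hw, hz, hr⟩ := hx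
  cases hw with
  | recur hg hw1 =>
    cases hz with
    | recur hz0 =>
      cases hr with
      | recur hr0 =>
        have hwr : WF 0 (Contract.recur x0) := WF.recur hg hw1
        exact ⟨wf_csubst hwr hw1 0 rfl,
          zeroFree_csubst (ZeroFree.recur hz0) hz0 0,
          rdyFree_csubst (RdyFree.recur hr0) hr0 0⟩

lemma good_unfoldsTo {x y : Contract} (h : UnfoldsTo x y) (hx : Good x) : Good y := by
  induction h with
  | refl => exact hx
  | tail _ hstep ih => exact good_ustep ih hstep

lemma ustep_det {x y y' : Contract} (h : UStep x y) (h' : UStep x y') : y = y' := by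
  obtain ⟨x0, rfl, rfl⟩ := h
  obtain ⟨x1, he, rfl⟩ := h'
  cases he
  rfl

lemma unfoldsTo_total {e x : Contract} (hx : UnfoldsTo e x) :
    ∀ {y}, UnfoldsTo e y → UnfoldsTo x y ∨ UnfoldsTo y x := by
  induction hx using Relation.ReflTransGen.head_induction_on with
  | refl => intro y hy; exact Or.inl hy
  | head hstep _ ih =>
      intro y hy
      rcases Relation.ReflTransGen.cases_head hy with rfl | ⟨z, hz, hzy⟩
      · exact Or.inr (Relation.ReflTransGen.head hstep (by assumption))
      · rw [ustep_det hstep hz] at *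
        exact ih hzy

/-- From a non-recur contract, no unfolding step. -/
lemma unfoldsTo_eq_of_not_recur {x y : Contract} (h : UnfoldsTo x y)
    (hnr : ∀ c0, x ≠ Contract.recur c0) : y = x := by
  rcases Relation.ReflTransGen.cases_head h with rfl | ⟨z, ⟨x0, he, _⟩, _⟩
  · rfl
  · exact absurd he (hnr x0)

lemma unfoldsTo_unique {e x y : Contract} (hx : UnfoldsTo e x) (hy : UnfoldsTo e y)
    (hnx : ∀ c0, x ≠ Contract.recur c0) (hny : ∀ c0, y ≠ Contract.recur c0) : x = y := by
  rcases unfoldsTo_total hx hy with h | h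
  · exact (unfoldsTo_eq_of_not_recur h hnx).symm
  · exact unfoldsTo_eq_of_not_recur h hny

lemma dual_ustep {x y : Contract} (h : UStep x y) : UStep (dual x) (dual y) := by
  obtain ⟨x0, rfl, rfl⟩ := h
  exact ⟨dual x0, by rw [dual], by rw [dual_csubst, dual]⟩

lemma dual_unfoldsTo {x y : Contract} (h : UnfoldsTo x y) : UnfoldsTo (dual x) (dual y) := by
  induction h with
  | refl => exact Relation.ReflTransGen.refl
  | tail _ hstep ih => exact Relation.ReflTransGen.tail ih (dual_ustep hstep)

theorem ung_dual : ∀ (c : Contract) {m : ℕ}, UnguardedVar m (dual c) → UnguardedVar m c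
  | .recur c, m, h => by
      rw [dual] at h
      cases h with
      | recur h0 => exact UnguardedVar.recur (ung_dual c h0)
  | .var n, m, h => by rw [dual] at h; exact h
  | .intSum l, m, h => by rw [dual] at h; cases h
  | .extSum l, m, h => by rw [dual] at h; cases h
  | .rdy a c, m, h => by rw [dual] at h; cases h

lemma RS_ustep {x y : Contract} (hw : Good x) (h : UStep x y) :
    RS y = RS x ∧ RS (dual y) = RS (dual x) := by
  obtain ⟨x0, rfl, rfl⟩ := h
  obtain ⟨hwf, _, _⟩ := hw
  cases hwf with
  | recur hg hw1 =>
    constructor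
    · rw [RS_csubst _ _ _ hg]
      show _ = RS (Contract.recur x0); simp only [RS]
    · rw [dual_csubst]
      rw [dual]
      rw [RS_csubst _ _ _ (fun hc => hg (ung_dual _ hc))]
      show _ = RS (Contract.recur (dual x0)); simp only [RS]

lemma RS_unfoldsTo {x y : Contract} (h : UnfoldsTo x y) (hx : Good x) :
    RS y = RS x ∧ RS (dual y) = RS (dual x) := by
  induction h with
  | refl => exact ⟨rfl, rfl⟩
  | tail hpre hstep ih =>
      have hg := good_unfoldsTo hpre hx
      have h2 := RS_ustep hg hstep
      exact ⟨h2.1.trans ih.1, h2.2.trans ih.2⟩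

end Aux3
section Aux4
open Contract

inductive HeadSum : Contract → Prop where
  | int : l ≠ [] → HeadSum (Contract.intSum l)
  | ext : l ≠ [] → HeadSum (Contract.extSum l)
  | recur : HeadSum c → HeadSum (Contract.recur c)

theorem headSum_of_good :
    ∀ (c : Contract) (k : ℕ), WF k c → (∀ m, ¬ UnguardedVar m c) →
      ZeroFree c → RdyFree c → HeadSum c
  | .intSum l, k, hw, hu, hz, hr => by
      cases hz with | intSum hne _ => exact HeadSum.int hne
  | .extSum l, k, hw, hu, hz, hr => by
      cases hz with | extSum hne _ => exact HeadSum.ext hne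
  | .rdy a c, k, hw, hu, hz, hr => by cases hr
  | .var n, k, hw, hu, hz, hr => absurd UnguardedVar.var (hu n)
  | .recur c, k, hw, hu, hz, hr => by
      cases hw with
      | recur hg hw0 =>
        cases hz with
        | recur hz0 =>
          cases hr with
          | recur hr0 =>
            refine HeadSum.recur (headSum_of_good c (k+1) hw0 ?_ hz0 hr0)
            intro m hm
            match m, hm with
            | 0, hm => exact hg hm
            | (m+1), hm => exact hu m (UnguardedVar.recur hm)

lemma mem_dualL {l : List (Atom × Contract)} {p : Atom × Contract} :
    p ∈ dualL l ↔ ∃ q ∈ l, p = (co q.1, dual q.2) := by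
  simp [dualL_eq_map, List.mem_map, eq_comm]

/-- The ready-set condition for a good contract against its dual. -/
theorem cond1_of_headSum :
    ∀ {e : Contract}, HeadSum e →
      ∀ X ∈ RS e, ∀ Y ∈ RS (dual e), ∃ t ∈ X, coT t ∈ Y := by
  intro e h
  induction h with
  | @int l hne =>
      intro X hX Y hY
      match l, hne with
      | (a, c) :: t, _ =>
        rw [dual, dualL] at hY
        simp only [RS, Set.mem_setOf_eq] at hX hY
        obtain ⟨q, hq, rfl⟩ := hX
        subst hY
        refine ⟨RToken.atom q.1, rfl, ?_⟩
        show ∃ r ∈ _, _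
        rcases List.mem_cons.1 hq with rfl | hq
        · exact ⟨(co a, dual c), List.mem_cons_self, rfl⟩
        · exact ⟨(co q.1, dual q.2), List.mem_cons_of_mem _ (mem_dualL.2 ⟨q, hq, rfl⟩), rfl⟩
  | @ext l hne =>
      intro X hX Y hY
      match l, hne with
      | (a, c) :: t, _ =>
        rw [dual, dualL] at hY
        simp only [RS, Set.mem_setOf_eq] at hX hY
        subst hX
        obtain ⟨r, hr, rfl⟩ := hY
        rcases List.mem_cons.1 hr with rfl | hr
        · exact ⟨RToken.atom a, ⟨(a, c), List.mem_cons_self, rfl⟩, rfl⟩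
        · obtain ⟨q, hq, rfl⟩ := mem_dualL.1 hr
          exact ⟨RToken.atom q.1, ⟨q, List.mem_cons_of_mem _ hq, rfl⟩, rfl⟩
  | @recur c hc ih =>
      intro X hX Y hY
      rw [dual] at hY
      simp only [RS] at hX hY
      exact ih X hX Y hY

theorem rdy_not_mem_RS :
    ∀ {c : Contract}, RdyFree c → ∀ X ∈ RS c, RToken.rdy ∉ X := by
  intro c h
  induction h with
  | @intSum l _ _ =>
      intro X hX
      match l with
      | [] => simp only [RS, Set.mem_singleton_iff] at hX; subst hX; simp
      | p :: t =>
          simp only [RS, Set.mem_setOf_eq] at hX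
          obtain ⟨q, _, rfl⟩ := hX
          simp
  | @extSum l _ _ =>
      intro X hX
      match l with
      | [] => simp only [RS, Set.mem_singleton_iff] at hX; subst hX; simp
      | p :: t =>
          simp only [RS, Set.mem_setOf_eq] at hX
          subst hX
          rintro ⟨q, _, hq⟩
          cases hq
  | @recur c _ ih =>
      intro X hX
      simp only [RS] at hX
      exact ih X hX
  | @var n =>
      intro X hX
      simp only [RS, Set.mem_singleton_iff] at hX
      subst hX; simp

lemma rdyFree_dual : ∀ {c : Contract}, RdyFree c → RdyFree (dual c) := by
  intro c h
  induction h with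
  | @intSum l h ih =>
      rw [dual, dualL_eq_map]
      refine RdyFree.extSum ?_
      intro p hp
      obtain ⟨q, hq, rfl⟩ := List.mem_map.1 hp
      exact ih q hq
  | @extSum l h ih =>
      rw [dual, dualL_eq_map]
      refine RdyFree.intSum ?_
      intro p hp
      obtain ⟨q, hq, rfl⟩ := List.mem_map.1 hp
      exact ih q hq
  | @recur c h ih => rw [dual]; exact RdyFree.recur ih
  | @var n => rw [dual]; exact RdyFree.var

end Aux4
section Aux5
open Contract

lemma co_inj {a b : Atom} (h : co a = co b) : a = b := by
  simpa [co] using h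

lemma dual_eq_recur {d y : Contract} (h : dual d = Contract.recur y) :
    ∃ d0, d = Contract.recur d0 ∧ y = dual d0 := by
  cases d <;> simp [dual] at h ⊢
  exact h.symm

lemma dual_eq_intSum {d : Contract} {m : List (Atom × Contract)}
    (h : dual d = Contract.intSum m) :
    ∃ m0, d = Contract.extSum m0 ∧ m = dualL m0 := by
  cases d <;> simp [dual] at h ⊢
  exact h.symm

lemma dual_eq_extSum {d : Contract} {m : List (Atom × Contract)}
    (h : dual d = Contract.extSum m) :
    ∃ m0, d = Contract.intSum m0 ∧ m = dualL m0 := by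
  cases d <;> simp [dual] at h ⊢
  exact h.symm

lemma dual_eq_rdy {d : Contract} {b : Atom} {z : Contract}
    (h : dual d = Contract.rdy b z) :
    ∃ a c, d = Contract.rdy a c := by
  cases d <;> simp [dual] at h ⊢

lemma nodup_snd {l : List (Atom × Contract)} (h : (l.map Prod.fst).Nodup)
    {a : Atom} {b b' : Contract} (h1 : (a, b) ∈ l) (h2 : (a, b') ∈ l) : b = b' := by
  induction l with
  | nil => cases h1
  | cons q t ih =>
      simp only [List.map_cons, List.nodup_cons] at h
      rcases List.mem_cons.1 h1 with e1 | h1 <;> rcases List.mem_cons.1 h2 with e2 | h2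
      · rw [← e1] at e2; exact (Prod.mk.injEq _ _ _ _ ▸ e2).2.symm
      · exfalso; exact h.1 (by rw [← e1]; exact List.mem_map.2 ⟨(a, b'), h2, rfl⟩)
      · exfalso; exact h.1 (by rw [← e2]; exact List.mem_map.2 ⟨(a, b), h1, rfl⟩)
      · exact ih h.2 h1 h2

lemma good_mem_int {l : List (Atom × Contract)} (h : Good (Contract.intSum l))
    {p : Atom × Contract} (hp : p ∈ l) : Good p.2 := by
  obtain ⟨hw, hz, hr⟩ := h
  cases hw with | intSum _ hw =>
  cases hz with | intSum _ hz =>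
  cases hr with | intSum hr =>
  exact ⟨hw p hp, hz p hp, hr p hp⟩

lemma good_mem_ext {l : List (Atom × Contract)} (h : Good (Contract.extSum l))
    {p : Atom × Contract} (hp : p ∈ l) : Good p.2 := by
  obtain ⟨hw, hz, hr⟩ := h
  cases hw with | extSum _ hw =>
  cases hz with | extSum _ hz =>
  cases hr with | extSum hr =>
  exact ⟨hw p hp, hz p hp, hr p hp⟩

/-- The invariant relation. -/
def CRel (c d : Contract) : Prop :=
  (∃ e c1 d1, Good e ∧ UnfoldsTo e c1 ∧ UnfoldsTo e d1 ∧ c = c1 ∧ d = dual d1) ∨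
  (∃ a e, Good e ∧ c = e ∧ d = Contract.rdy a (dual e)) ∨
  (∃ a e, Good e ∧ c = Contract.rdy a e ∧ d = dual e)

lemma notrec_int {l : List (Atom × Contract)} :
    ∀ c0, Contract.intSum l ≠ Contract.recur c0 := fun _ h => by cases h

lemma notrec_ext {l : List (Atom × Contract)} :
    ∀ c0, Contract.extSum l ≠ Contract.recur c0 := fun _ h => by cases h

/-- No step is possible when the second contract is a `rdy` and the first is rdy-free. -/
theorem stepA_no_rdy_second :
    ∀ {x y a c' d'}, StepA x y a c' d' → ∀ {b z}, y = Contract.rdy b z → RdyFree x → False := by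
  intro x y a c' d' h
  induction h with
  | intExt _ _ => intro b z hy _; cases hy
  | intInt _ => intro b z hy _; cases hy
  | extExt _ _ => intro b z hy _; cases hy
  | rdy => intro b z hy hr; cases hr
  | intExtFail _ _ => intro b z hy _; cases hy
  | intIntFail _ _ => intro b z hy _; cases hy
  | extExtFail _ _ => intro b z hy _; cases hy
  | @recL c _ _ _ _ _ ih =>
      intro b z hy hr
      cases hr with
      | recur hr0 => exact ih hy (rdyFree_csubst (RdyFree.recur hr0) hr0 0)
  | recR _ ih => intro b z hy _; cases hy

/-- Main lemma for participant A's moves from a `(c, dual c)`-style pair. -/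
theorem stepA_left :
    ∀ {x y a c' d'}, StepA x y a c' d' →
      ∀ {e d1}, Good e → UnfoldsTo e x → UnfoldsTo e d1 → y = dual d1 → CRel c' d' := by
  intro x y a c' d' h
  induction h with
  | @intExt l a c' m d' hmem hmem' =>
      intro e d1 hg hux hud hy
      obtain ⟨m0, rfl, rfl⟩ := dual_eq_extSum hy.symm
      have heq := unfoldsTo_unique hux hud notrec_int notrec_int
      cases heq
      obtain ⟨q, hq, hqe⟩ := mem_dualL.1 hmem'
      have ha : co a = co q.1 := (Prod.mk.injEq _ _ _ _ ▸ hqe).1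
      have hd' : d' = dual q.2 := (Prod.mk.injEq _ _ _ _ ▸ hqe).2
      have haq : a = q.1 := co_inj ha
      have hgs : Good (Contract.intSum l) := good_unfoldsTo hux hg
      have hnd : (l.map Prod.fst).Nodup := by
        cases hgs.1 with | intSum hnd _ => exact hnd
      have hc : c' = q.2 := by
        have hq2 : (a, q.2) ∈ l := by rw [haq]; simpa using hq
        exact nodup_snd hnd hmem hq2
      subst hd'
      rw [hc]
      exact Or.inr (Or.inl ⟨co a, q.2, good_mem_int hgs hq, rfl, rfl⟩)
  | @intInt l a c' d'0 hmem =>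
      intro e d1 hg hux hud hy
      obtain ⟨m0, rfl, _⟩ := dual_eq_intSum hy.symm
      exact absurd (unfoldsTo_unique hux hud notrec_int notrec_ext) (by simp)
  | @extExt l a c' m d' hmem hmem' =>
      intro e d1 hg hux hud hy
      obtain ⟨m0, rfl, _⟩ := dual_eq_extSum hy.symm
      exact absurd (unfoldsTo_unique hux hud notrec_ext notrec_int) (by simp)
  | @rdy a c d =>
      intro e d1 hg hux hud hy
      have := (good_unfoldsTo hux hg).2.2
      cases this
  | @intExtFail l a c' m hmem hfa =>
      intro e d1 hg hux hud hy
      obtain ⟨m0, rfl, rfl⟩ := dual_eq_extSum hy.symm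
      have heq := unfoldsTo_unique hux hud notrec_int notrec_int
      cases heq
      exact absurd (by simp [co] : co (co a) = a)
        (hfa (co a, dual c') (mem_dualL.2 ⟨(a, c'), hmem, rfl⟩))
  | @intIntFail l a c' m hmem hne =>
      intro e d1 hg hux hud hy
      obtain ⟨m0, rfl, _⟩ := dual_eq_intSum hy.symm
      exact absurd (unfoldsTo_unique hux hud notrec_int notrec_ext) (by simp)
  | @extExtFail l a c' m hmem hfa =>
      intro e d1 hg hux hud hy
      obtain ⟨m0, rfl, _⟩ := dual_eq_extSum hy.symm
      exact absurd (unfoldsTo_unique hux hud notrec_ext notrec_int) (by simp)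
  | @recL c0 d0 a0 c'0 d'0 hprem ih =>
      intro e d1 hg hux hud hy
      exact ih hg (Relation.ReflTransGen.tail hux ⟨c0, rfl, rfl⟩) hud hy
  | @recR c0 d0 a0 c'0 d'0 hprem ih =>
      intro e d1 hg hux hud hy
      obtain ⟨dd, rfl, rfl⟩ := dual_eq_recur hy.symm
      refine ih hg hux (Relation.ReflTransGen.tail hud ⟨dd, rfl, rfl⟩) ?_
      rw [dual_csubst, dual]
end Aux5
section Aux6
open Contract

/-- Main lemma for participant B's moves from a `(c, dual c)`-style pair:
the subject is `StepA (dual d1) c1 a d' c'` and the resulting pair is `(c', d')`. -/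
theorem stepA_right :
    ∀ {x y a d' c'}, StepA x y a d' c' →
      ∀ {e c1 d1}, Good e → UnfoldsTo e c1 → UnfoldsTo e d1 →
        x = dual d1 → y = c1 → CRel c' d' := by
  intro x y a d' c' h
  induction h with
  | @intExt m' b z l w hmem hmem' =>
      -- x = intSum m', y = extSum l; z = d', result c' = rdy (co b) w
      intro e c1 d1 hg huc hud hx hy
      obtain ⟨m0, rfl, hm⟩ := dual_eq_intSum hx.symm
      subst hy hm
      have heq := unfoldsTo_unique huc hud notrec_ext notrec_ext
      cases heq
      obtain ⟨q, hq, hqe⟩ := mem_dualL.1 hmem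
      have hb : b = co q.1 := (Prod.mk.injEq _ _ _ _ ▸ hqe).1
      have hz : z = dual q.2 := (Prod.mk.injEq _ _ _ _ ▸ hqe).2
      have hgs : Good (Contract.extSum l) := good_unfoldsTo huc hg
      have hnd : (l.map Prod.fst).Nodup := by
        cases hgs.1 with | extSum hnd _ => exact hnd
      have hw : w = q.2 := by
        have h1 : (co b, w) ∈ l := hmem'
        have h2 : (co b, q.2) ∈ l := by
          rw [hb]; simp only [co, neg_neg]; simpa using hq
        exact nodup_snd hnd h1 h2
      subst hz hw
      have hcb : co b = q.1 := by rw [hb]; simp [co]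
      rw [hcb]
      exact Or.inr (Or.inr ⟨q.1, q.2, good_mem_ext hgs hq, rfl, rfl⟩)
  | @intInt l a c' d'0 hmem =>
      intro e c1 d1 hg huc hud hx hy
      obtain ⟨m0, rfl, _⟩ := dual_eq_intSum hx.symm
      subst hy
      exact absurd (unfoldsTo_unique huc hud notrec_int notrec_ext) (by simp)
  | @extExt l a c' m d' hmem hmem' =>
      intro e c1 d1 hg huc hud hx hy
      obtain ⟨m0, rfl, _⟩ := dual_eq_extSum hx.symm
      subst hy
      exact absurd (unfoldsTo_unique huc hud notrec_ext notrec_int) (by simp)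
  | @rdy a c d =>
      intro e c1 d1 hg huc hud hx hy
      obtain ⟨b, z, hd1⟩ := dual_eq_rdy hx.symm
      have := (good_unfoldsTo hud hg).2.2
      rw [hd1] at this
      cases this
  | @intExtFail m' b z l hmem hfa =>
      intro e c1 d1 hg huc hud hx hy
      obtain ⟨m0, rfl, hm⟩ := dual_eq_intSum hx.symm
      subst hy hm
      have heq := unfoldsTo_unique huc hud notrec_ext notrec_ext
      cases heq
      obtain ⟨q, hq, hqe⟩ := mem_dualL.1 hmem
      have hb : b = co q.1 := (Prod.mk.injEq _ _ _ _ ▸ hqe).1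
      exact absurd (by rw [hb]) (hfa q hq)
  | @intIntFail l a c' m hmem hne =>
      intro e c1 d1 hg huc hud hx hy
      obtain ⟨m0, rfl, _⟩ := dual_eq_intSum hx.symm
      subst hy
      exact absurd (unfoldsTo_unique huc hud notrec_int notrec_ext) (by simp)
  | @extExtFail l a c' m hmem hfa =>
      intro e c1 d1 hg huc hud hx hy
      obtain ⟨m0, rfl, _⟩ := dual_eq_extSum hx.symm
      subst hy
      exact absurd (unfoldsTo_unique huc hud notrec_ext notrec_int) (by simp)
  | @recL c0 d0 a0 c'0 d'0 hprem ih =>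
      intro e c1 d1 hg huc hud hx hy
      obtain ⟨dd, rfl, hdd⟩ := dual_eq_recur hx.symm
      refine ih hg huc (Relation.ReflTransGen.tail hud ⟨dd, rfl, rfl⟩) ?_ hy
      rw [dual_csubst, dual, ← hdd]
  | @recR c0 d0 a0 c'0 d'0 hprem ih =>
      intro e c1 d1 hg huc hud hx hy
      subst hy
      exact ih hg (Relation.ReflTransGen.tail huc ⟨d0, rfl, rfl⟩) hud hx rfl

/-- Moves of the participant holding a `rdy` whose partner matches. -/
theorem stepA_rdyfirst :
    ∀ {x y b d' c'}, StepA x y b d' c' →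
      ∀ {a e c1}, x = Contract.rdy a (dual e) → Good e → UnfoldsTo e c1 → y = c1 →
        CRel c' d' := by
  intro x y b d' c' h
  induction h with
  | intExt _ _ => intro a e c1 hx; cases hx
  | intInt _ => intro a e c1 hx; cases hx
  | extExt _ _ => intro a e c1 hx; cases hx
  | @rdy b0 z y0 =>
      intro a e c1 hx hg huc hy
      cases hx
      subst hy
      exact Or.inl ⟨e, y0, e, hg, huc, Relation.ReflTransGen.refl, rfl, rfl⟩
  | intExtFail _ _ => intro a e c1 hx; cases hx
  | intIntFail _ _ => intro a e c1 hx; cases hx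
  | extExtFail _ _ => intro a e c1 hx; cases hx
  | recL _ _ => intro a e c1 hx; cases hx
  | @recR c0 d0 a0 c'0 d'0 hprem ih =>
      intro a e c1 hx hg huc hy
      subst hy
      exact ih hx hg (Relation.ReflTransGen.tail huc ⟨d0, rfl, rfl⟩) rfl

theorem stepA_rdyleft :
    ∀ {x y b c' d'}, StepA x y b c' d' →
      ∀ {a e d1}, x = Contract.rdy a e → Good e → UnfoldsTo e d1 → y = dual d1 →
        CRel c' d' := by
  intro x y b c' d' h
  induction h with
  | intExt _ _ => intro a e d1 hx; cases hx
  | intInt _ => intro a e d1 hx; cases hx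
  | extExt _ _ => intro a e d1 hx; cases hx
  | @rdy b0 z y0 =>
      intro a e d1 hx hg hud hy
      cases hx
      subst hy
      exact Or.inl ⟨z, z, d1, hg, Relation.ReflTransGen.refl, hud, rfl, rfl⟩
  | intExtFail _ _ => intro a e d1 hx; cases hx
  | intIntFail _ _ => intro a e d1 hx; cases hx
  | extExtFail _ _ => intro a e d1 hx; cases hx
  | recL _ _ => intro a e d1 hx; cases hx
  | @recR c0 d0 a0 c'0 d'0 hprem ih =>
      intro a e d1 hx hg hud hy
      obtain ⟨dd, rfl, hdd⟩ := dual_eq_recur hy.symm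
      refine ih hx hg (Relation.ReflTransGen.tail hud ⟨dd, rfl, rfl⟩) ?_
      rw [dual_csubst, dual, ← hdd]

end Aux6
section Final
open Contract

theorem crel_compRel : CompRel' CRel := by
  intro c d hR
  constructor
  · rcases hR with ⟨e, c1, d1, hg, huc, hud, rfl, rfl⟩ | ⟨a, e, hg, rfl, rfl⟩ |
      ⟨a, e, hg, rfl, rfl⟩
    · intro X hX Y hY
      rw [(RS_unfoldsTo huc hg).1] at hX
      rw [(RS_unfoldsTo hud hg).2] at hY
      exact Or.inl (cond1_of_headSum
        (headSum_of_good e 0 hg.1 (no_ung_of_closed hg.1) hg.2.1 hg.2.2) X hX Y hY)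
    · intro X hX Y hY
      simp only [RS, Set.mem_singleton_iff] at hY
      subst hY
      refine Or.inr ⟨Set.mem_union_right _ rfl, ?_⟩
      rintro ⟨hx, -⟩
      exact rdy_not_mem_RS hg.2.2 X hX hx
    · intro X hX Y hY
      simp only [RS, Set.mem_singleton_iff] at hX
      subst hX
      refine Or.inr ⟨Set.mem_union_left _ rfl, ?_⟩
      rintro ⟨-, hy⟩
      exact rdy_not_mem_RS (rdyFree_dual hg.2.2) Y hY hy
  · intro μ c' d' hstep
    rcases hR with ⟨e, c1, d1, hg, huc, hud, rfl, rfl⟩ | ⟨a, e, hg, rfl, rfl⟩ |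
      ⟨a, e, hg, rfl, rfl⟩
    · cases hstep with
      | left h => exact stepA_left h hg huc hud rfl
      | right h => exact stepA_right h hg huc hud rfl rfl
    · cases hstep with
      | left h => exact (stepA_no_rdy_second h rfl hg.2.2).elim
      | right h => exact stepA_rdyfirst h rfl hg Relation.ReflTransGen.refl rfl
    · cases hstep with
      | left h => exact stepA_rdyleft h rfl hg Relation.ReflTransGen.refl rfl
      | right h => exact (stepA_no_rdy_second h rfl (rdyFree_dual hg.2.2)).elim

end Final

/-- every `0`-free, `rdy`-free contract is compliant with its dual. -/
theorem stmt5 (c : Contract) (hwf : Contract.WF 0 c)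
    (h0 : Contract.ZeroFree c) (hr : Contract.RdyFree c) :
    Compliant c (dual c) :=
  ⟨CRel, crel_compRel, Or.inl ⟨c, c, c, ⟨hwf, h0, hr⟩,
    Relation.ReflTransGen.refl, Relation.ReflTransGen.refl, rfl, rfl⟩⟩
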